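/- The 9-point filter with weights (−1/256, 1/32, −7/64, 7/32, 93/128, 7/32, −7/64, 1/32, −1/256) has Fourier symbol ℱ(θ) = 93/128 + (7/16)cos θ − (7/32)cos 2θ + (1/16)cos 3θ − (1/128)cos 4θ satisfying ℱ(θ) = 1 + O(θ⁸) as θ → 0: all derivatives of ℱ at 0 up to order 7 vanish and ℱ(0) = 1. -/

import Mathlib

open Real

private lemma hdmul (c x : ℝ) : HasDerivAt (fun θ : ℝ => c * θ) c x := by
  simpa using (hasDerivAt_id x).const_mul c

private lemma hdcos (c x : ℝ) :
    HasDerivAt (fun θ : ℝ => Real.cos (c * θ)) (-Real.sin (c * x) * c) x := by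
  simpa [Function.comp_def] using (Real.hasDerivAt_cos (c * x)).comp x (hdmul c x)

private lemma hdsin (c x : ℝ) :
    HasDerivAt (fun θ : ℝ => Real.sin (c * θ)) (Real.cos (c * x) * c) x := by
  simpa [Function.comp_def] using (Real.hasDerivAt_sin (c * x)).comp x (hdmul c x)

private lemma derivC (a b c d e : ℝ) :
    deriv (fun θ : ℝ => e + a * Real.cos (1 * θ) + b * Real.cos (2 * θ)
        + c * Real.cos (3 * θ) + d * Real.cos (4 * θ))
      = fun θ : ℝ => (-a) * Real.sin (1 * θ) + (-2 * b) * Real.sin (2 * θ)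
        + (-3 * c) * Real.sin (3 * θ) + (-4 * d) * Real.sin (4 * θ) := by
  funext x
  have h : HasDerivAt (fun θ : ℝ => e + a * Real.cos (1 * θ) + b * Real.cos (2 * θ)
      + c * Real.cos (3 * θ) + d * Real.cos (4 * θ))
      ((-a) * Real.sin (1 * x) + (-2 * b) * Real.sin (2 * x)
        + (-3 * c) * Real.sin (3 * x) + (-4 * d) * Real.sin (4 * x)) x := by
    have := ((((hasDerivAt_const x e).add ((hdcos 1 x).const_mul a)).add
      ((hdcos 2 x).const_mul b)).add ((hdcos 3 x).const_mul c)).add ((hdcos 4 x).const_mul d)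
    refine this.congr_deriv ?_
    ring
  exact h.deriv

private lemma derivS (a b c d : ℝ) :
    deriv (fun θ : ℝ => a * Real.sin (1 * θ) + b * Real.sin (2 * θ)
        + c * Real.sin (3 * θ) + d * Real.sin (4 * θ))
      = fun θ : ℝ => 0 + a * Real.cos (1 * θ) + (2 * b) * Real.cos (2 * θ)
        + (3 * c) * Real.cos (3 * θ) + (4 * d) * Real.cos (4 * θ) := by
  funext x
  have h : HasDerivAt (fun θ : ℝ => a * Real.sin (1 * θ) + b * Real.sin (2 * θ)
      + c * Real.sin (3 * θ) + d * Real.sin (4 * θ))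
      (0 + a * Real.cos (1 * x) + (2 * b) * Real.cos (2 * x)
        + (3 * c) * Real.cos (3 * x) + (4 * d) * Real.cos (4 * x)) x := by
    have := ((((hdsin 1 x).const_mul a).add ((hdsin 2 x).const_mul b)).add
      ((hdsin 3 x).const_mul c)).add ((hdsin 4 x).const_mul d)
    refine this.congr_deriv ?_
    ring
  exact h.deriv

/-- The 9-point filter has Fourier symbol
ℱ(θ) = 93/128 + (7/16)cos θ − (7/32)cos 2θ + (1/16)cos 3θ − (1/128)cos 4θ
satisfying ℱ(θ) = 1 + O(θ⁸): ℱ(0) = 1 and all derivatives at 0 up to order 7 vanish. -/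
theorem stmt14 (F : ℝ → ℝ)
    (hF : ∀ θ, F θ = 93 / 128 + (7 / 16) * Real.cos θ - (7 / 32) * Real.cos (2 * θ)
        + (1 / 16) * Real.cos (3 * θ) - (1 / 128) * Real.cos (4 * θ)) :
    F 0 = 1 ∧ ∀ n : ℕ, 1 ≤ n → n ≤ 7 → iteratedDeriv n F 0 = 0 := by
  have hF' : F = fun θ : ℝ => 93 / 128 + (7 / 16) * Real.cos (1 * θ)
      + (-7 / 32) * Real.cos (2 * θ) + (1 / 16) * Real.cos (3 * θ)
      + (-1 / 128) * Real.cos (4 * θ) := by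
    funext x
    rw [hF x, one_mul]
    ring
  constructor
  · rw [hF 0]
    norm_num
  · have d1 : deriv F = fun θ : ℝ => (-(7/16)) * Real.sin (1*θ) + (7/16) * Real.sin (2*θ)
        + (-(3/16)) * Real.sin (3*θ) + (1/32) * Real.sin (4*θ) := by
      rw [hF', derivC]; funext x; ring
    have d2 : deriv (fun θ : ℝ => (-(7/16)) * Real.sin (1*θ) + (7/16) * Real.sin (2*θ)
        + (-(3/16)) * Real.sin (3*θ) + (1/32) * Real.sin (4*θ))
        = fun θ : ℝ => 0 + (-(7/16)) * Real.cos (1*θ) + (7/8) * Real.cos (2*θ)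
        + (-(9/16)) * Real.cos (3*θ) + (1/8) * Real.cos (4*θ) := by
      rw [derivS]; funext x; ring
    have d3 : deriv (fun θ : ℝ => 0 + (-(7/16)) * Real.cos (1*θ) + (7/8) * Real.cos (2*θ)
        + (-(9/16)) * Real.cos (3*θ) + (1/8) * Real.cos (4*θ))
        = fun θ : ℝ => (7/16) * Real.sin (1*θ) + (-(7/4)) * Real.sin (2*θ)
        + (27/16) * Real.sin (3*θ) + (-(1/2)) * Real.sin (4*θ) := by
      rw [derivC]; funext x; ring
    have d4 : deriv (fun θ : ℝ => (7/16) * Real.sin (1*θ) + (-(7/4)) * Real.sin (2*θ)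
        + (27/16) * Real.sin (3*θ) + (-(1/2)) * Real.sin (4*θ))
        = fun θ : ℝ => 0 + (7/16) * Real.cos (1*θ) + (-(7/2)) * Real.cos (2*θ)
        + (81/16) * Real.cos (3*θ) + (-2) * Real.cos (4*θ) := by
      rw [derivS]; funext x; ring
    have d5 : deriv (fun θ : ℝ => 0 + (7/16) * Real.cos (1*θ) + (-(7/2)) * Real.cos (2*θ)
        + (81/16) * Real.cos (3*θ) + (-2) * Real.cos (4*θ))
        = fun θ : ℝ => (-(7/16)) * Real.sin (1*θ) + (7 : ℝ) * Real.sin (2*θ)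
        + (-(243/16)) * Real.sin (3*θ) + (8 : ℝ) * Real.sin (4*θ) := by
      rw [derivC]; funext x; ring
    have d6 : deriv (fun θ : ℝ => (-(7/16)) * Real.sin (1*θ) + (7 : ℝ) * Real.sin (2*θ)
        + (-(243/16)) * Real.sin (3*θ) + (8 : ℝ) * Real.sin (4*θ))
        = fun θ : ℝ => 0 + (-(7/16)) * Real.cos (1*θ) + (14 : ℝ) * Real.cos (2*θ)
        + (-(729/16)) * Real.cos (3*θ) + (32 : ℝ) * Real.cos (4*θ) := by
      rw [derivS]; funext x; ring
    have d7 : deriv (fun θ : ℝ => 0 + (-(7/16)) * Real.cos (1*θ) + (14 : ℝ) * Real.cos (2*θ)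
        + (-(729/16)) * Real.cos (3*θ) + (32 : ℝ) * Real.cos (4*θ))
        = fun θ : ℝ => (7/16) * Real.sin (1*θ) + (-28 : ℝ) * Real.sin (2*θ)
        + (2187/16) * Real.sin (3*θ) + (-128 : ℝ) * Real.sin (4*θ) := by
      rw [derivC]; funext x; ring
    intro n h1 h7
    interval_cases n
    · rw [iteratedDeriv_one, d1]; norm_num
    · rw [show (2:ℕ) = 1+1 from rfl, iteratedDeriv_succ, iteratedDeriv_one, d1, d2]; norm_num
    · rw [show (3:ℕ) = 2+1 from rfl, iteratedDeriv_succ, show (2:ℕ) = 1+1 from rfl,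
        iteratedDeriv_succ, iteratedDeriv_one, d1, d2, d3]
      norm_num
    · rw [show (4:ℕ) = 3+1 from rfl, iteratedDeriv_succ, show (3:ℕ) = 2+1 from rfl,
        iteratedDeriv_succ, show (2:ℕ) = 1+1 from rfl, iteratedDeriv_succ, iteratedDeriv_one,
        d1, d2, d3, d4]
      norm_num
    · rw [show (5:ℕ) = 4+1 from rfl, iteratedDeriv_succ, show (4:ℕ) = 3+1 from rfl,
        iteratedDeriv_succ, show (3:ℕ) = 2+1 from rfl, iteratedDeriv_succ,
        show (2:ℕ) = 1+1 from rfl, iteratedDeriv_succ, iteratedDeriv_one, d1, d2, d3, d4, d5]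
      norm_num
    · rw [show (6:ℕ) = 5+1 from rfl, iteratedDeriv_succ, show (5:ℕ) = 4+1 from rfl,
        iteratedDeriv_succ, show (4:ℕ) = 3+1 from rfl, iteratedDeriv_succ,
        show (3:ℕ) = 2+1 from rfl, iteratedDeriv_succ, show (2:ℕ) = 1+1 from rfl,
        iteratedDeriv_succ, iteratedDeriv_one, d1, d2, d3, d4, d5, d6]
      norm_num
    · rw [show (7:ℕ) = 6+1 from rfl, iteratedDeriv_succ, show (6:ℕ) = 5+1 from rfl,
        iteratedDeriv_succ, show (5:ℕ) = 4+1 from rfl, iteratedDeriv_succ,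
        show (4:ℕ) = 3+1 from rfl, iteratedDeriv_succ, show (3:ℕ) = 2+1 from rfl,
        iteratedDeriv_succ, show (2:ℕ) = 1+1 from rfl, iteratedDeriv_succ, iteratedDeriv_one,
        d1, d2, d3, d4, d5, d6, d7]
      norm_num
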